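/- Let w solve the unreflected auxiliary system for data (B,b,y) and wⁿ solve it for data (Bⁿ,bⁿ,yⁿ). Fix t ≥ 0 and δ > 0, and suppose |bⁿ − b| + ‖yⁿ − y‖_t + ‖φ_{Bⁿ}(w₂) − φ_B(w₂)‖_t < δ. Then ‖w₁ⁿ − w₁‖_t ≤ 2δ(1+t)e^{6t} and ‖w₂ⁿ − w₂‖_t ≤ 4δ(1+t)e^{6t}. -/

import Mathlib

open MeasureTheory Filter Set
open scoped ENNReal

noncomputable section

/-- `f` is càdlàg on `[0,∞)`: right-continuous at every `t ≥ 0` and possessing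
finite left limits at every `t > 0`.  (Values on `(-∞,0)` are irrelevant.) -/
def Cadlag (f : ℝ → ℝ) : Prop :=
  (∀ t : ℝ, 0 ≤ t → ContinuousWithinAt f (Set.Ici t) t) ∧
    (∀ t : ℝ, 0 < t → ∃ L : ℝ, Filter.Tendsto f (nhdsWithin t (Set.Iio t)) (nhds L))

/-- Uniform norm of `x` on `[0,t]`: `‖x‖_t = sup_{0 ≤ s ≤ t} |x(s)|`. -/
def unif (x : ℝ → ℝ) (t : ℝ) : ℝ := ⨆ s : Set.Icc (0:ℝ) t, |x s.1|

/-- Regulator of the one-sided reflection map with upper barrier `κ ∈ ℝ`: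
`ψ_κ(x)(t) = sup_{0 ≤ s ≤ t} (x(s) - κ)⁺`. -/
def psiR (κ : ℝ) (x : ℝ → ℝ) (t : ℝ) : ℝ := ⨆ s : Set.Icc (0:ℝ) t, max (x s.1 - κ) 0

/-- One-sided reflection map with upper barrier `κ ∈ ℝ`: `φ_κ(x) = x - ψ_κ(x)`. -/
def phiR (κ : ℝ) (x : ℝ → ℝ) (t : ℝ) : ℝ := x t - psiR κ x t

/-- Regulator for a barrier `κ ∈ [0,∞]`; for `κ = ∞` it is identically `0`. -/
def psiE (κ : ℝ≥0∞) (x : ℝ → ℝ) : ℝ → ℝ := if κ = ⊤ then 0 else psiR κ.toReal x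

/-- Reflection map for a barrier `κ ∈ [0,∞]`; for `κ = ∞` it is the identity. -/
def phiE (κ : ℝ≥0∞) (x : ℝ → ℝ) : ℝ → ℝ := if κ = ⊤ then x else phiR κ.toReal x

/-- "`∫ 𝟙_S du = 0`": every Stieltjes function agreeing with the
(constant-below-zero extension of) `u` assigns measure zero to `S`. -/
def ZeroStieltjesOn (u : ℝ → ℝ) (S : Set ℝ) : Prop :=
  ∀ sf : StieltjesFunction ℝ, (∀ t : ℝ, sf t = u (max t 0)) → sf.measure S = 0

/-- `u₁, u₂` is a valid pair of regulator processes for `x₁` (barrier `0` from above)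
and `x₂` (upper barrier `B ∈ [0,∞]`): nondecreasing nonnegative elements of `D` with
`∫₀^∞ 𝟙{x₁(t) < 0} du₁(t) = 0` and `∫₀^∞ 𝟙{x₂(t) < B} du₂(t) = 0`. -/
def IsRegulator (B : ℝ≥0∞) (x₁ x₂ u₁ u₂ : ℝ → ℝ) : Prop :=
  Cadlag u₁ ∧ Cadlag u₂ ∧ MonotoneOn u₁ (Set.Ici 0) ∧ MonotoneOn u₂ (Set.Ici 0) ∧
    (∀ t ≥ (0:ℝ), 0 ≤ u₁ t) ∧ (∀ t ≥ (0:ℝ), 0 ≤ u₂ t) ∧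
    ZeroStieltjesOn u₁ {t | 0 ≤ t ∧ x₁ t < 0} ∧
    ZeroStieltjesOn u₂ {t | 0 ≤ t ∧ ENNReal.ofReal (x₂ t) < B}
/-- `(w₁, w₂)` solves the unreflected auxiliary system with data
`(B, b₁, b₂, y₁, y₂)` (equations (20)-(21) of the paper). -/
def IsAuxSolution (B : ℝ≥0∞) (b₁ b₂ : ℝ) (y₁ y₂ w₁ w₂ : ℝ → ℝ) : Prop :=
  Cadlag w₁ ∧ Cadlag w₂ ∧
  (∀ t ≥ (0:ℝ), w₁ t =
      b₁ + y₁ t + ∫ s in (0:ℝ)..t, (-(phiR 0 w₁ s) + phiE B w₂ s)) ∧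
  (∀ t ≥ (0:ℝ), w₂ t =
      b₂ + y₂ t + psiR 0 w₁ t + ∫ s in (0:ℝ)..t, -(phiE B w₂ s)) ∧
  (∀ t ≥ (0:ℝ), 0 ≤ w₂ t)

lemma measurable_of_rc {f : ℝ → ℝ} (hf : ∀ s : ℝ, ContinuousWithinAt f (Set.Ici s) s) :
    Measurable f := by
  apply measurable_of_tendsto_metrizable
    (f := fun n (s : ℝ) => f ((⌈s * 2 ^ n⌉ : ℤ) / 2 ^ n))
  · intro n
    have : (fun s : ℝ => f ((⌈s * 2 ^ n⌉ : ℤ) / 2 ^ n)) =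
        (fun k : ℤ => f (k / 2 ^ n)) ∘ fun s : ℝ => ⌈s * 2 ^ n⌉ := rfl
    rw [this]
    exact measurable_from_top.comp (Int.measurable_ceil.comp (measurable_id.mul_const _))
  · rw [tendsto_pi_nhds]
    intro s
    apply (hf s).tendsto.comp
    rw [tendsto_nhdsWithin_iff]
    have h2 : ∀ n : ℕ, s ≤ ((⌈s * 2 ^ n⌉ : ℤ) : ℝ) / 2 ^ n := by
      intro n
      rw [le_div_iff₀ (by positivity)]
      exact Int.le_ceil _
    have h1 : ∀ n : ℕ, ((⌈s * 2 ^ n⌉ : ℤ) : ℝ) / 2 ^ n ≤ s + (1 / 2) ^ n := by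
      intro n
      rw [div_le_iff₀ (by positivity)]
      have := (Int.ceil_lt_add_one (s * 2 ^ n)).le
      calc ((⌈s * 2 ^ n⌉ : ℤ) : ℝ) ≤ s * 2 ^ n + 1 := this
        _ = (s + (1 / 2) ^ n) * 2 ^ n := by
            rw [add_mul, div_pow, one_pow, div_mul_cancel₀ _ (by positivity)]
    constructor
    · refine tendsto_of_tendsto_of_tendsto_of_le_of_le tendsto_const_nhds ?_ h2 h1
      have : Tendsto (fun n : ℕ => s + (1 / 2 : ℝ) ^ n) atTop (nhds (s + 0)) :=
        tendsto_const_nhds.add (tendsto_pow_atTop_nhds_zero_of_lt_one (by norm_num) (by norm_num))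
      simpa using this
    · exact Filter.Eventually.of_forall fun n => h2 n

lemma cadlag_bdd {f : ℝ → ℝ} (hf : Cadlag f) (t : ℝ) :
    ∃ M : ℝ, 0 ≤ M ∧ ∀ s ∈ Set.Icc (0:ℝ) t, |f s| ≤ M := by
  rcases lt_or_ge t 0 with ht | ht
  · exact ⟨0, le_rfl, fun s hs => absurd (hs.1.trans hs.2) (not_le.2 ht)⟩
  suffices h : ∃ M : ℝ, ∀ s ∈ Set.Icc (0:ℝ) t, |f s| ≤ M by
    obtain ⟨M, hM⟩ := h
    exact ⟨max M 0, le_max_right _ _, fun s hs => (hM s hs).trans (le_max_left _ _)⟩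
  set S := {s : ℝ | s ∈ Set.Icc (0:ℝ) t ∧ ∃ M, ∀ r ∈ Set.Icc (0:ℝ) s, |f r| ≤ M} with hS
  have h0 : (0:ℝ) ∈ S := by
    refine ⟨⟨le_rfl, ht⟩, |f 0|, fun r hr => ?_⟩
    have : r = 0 := le_antisymm hr.2 hr.1
    simp [this]
  have hbdd : BddAbove S := ⟨t, fun s hs => hs.1.2⟩
  set c := sSup S with hc
  have hc0 : 0 ≤ c := le_csSup hbdd h0
  have hct : c ≤ t := csSup_le ⟨0, h0⟩ fun s hs => hs.1.2
  -- c ∈ S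
  have hcS : c ∈ S := by
    rcases hc0.eq_or_lt with h | hcpos
    · rwa [← h]
    obtain ⟨L, hL⟩ := hf.2 c hcpos
    have habs : ∀ᶠ r in nhdsWithin c (Set.Iio c), |f r| ≤ |L| + 1 := by
      have := hL.abs
      have h2 : ∀ᶠ u in nhds |L|, u ≤ |L| + 1 :=
        Filter.Tendsto.eventually_le_const (by linarith) tendsto_id
      exact this.eventually h2
    rw [eventually_nhdsWithin_iff, Metric.eventually_nhds_iff] at habs
    obtain ⟨ε, hε, hball⟩ := habs
    set ε' := min ε c with hε'
    have hε'pos : 0 < ε' := lt_min hε hcpos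
    obtain ⟨s₀, hs₀S, hs₀⟩ := exists_lt_of_lt_csSup ⟨0, h0⟩ (show c - ε' < c by linarith)
    obtain ⟨⟨hs₀0, hs₀t⟩, M₀, hM₀⟩ := hs₀S
    refine ⟨⟨hc0, hct⟩, max (max M₀ (|L| + 1)) (|f c|), fun r hr => ?_⟩
    rcases le_or_gt r s₀ with h | h
    · exact (hM₀ r ⟨hr.1, h⟩).trans ((le_max_left _ _).trans (le_max_left _ _))
    rcases eq_or_lt_of_le hr.2 with h' | h'
    · rw [h']; exact le_max_right _ _
    · refine (hball ?_ h').trans ((le_max_right _ _).trans (le_max_left _ _))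
      rw [Real.dist_eq, abs_lt]
      constructor
      · have : c - ε' < r := lt_of_le_of_lt (by linarith) h
        have : c - ε ≤ c - ε' := by
          have := min_le_left ε c; linarith
        linarith [lt_of_le_of_lt (show c - ε' ≤ s₀ from by linarith) h]
      · linarith
  -- c = t
  have hcet : c = t := by
    by_contra hne
    have hclt : c < t := lt_of_le_of_ne hct hne
    have hrc := hf.1 c hc0
    have habs : ∀ᶠ r in nhdsWithin c (Set.Ici c), |f r| ≤ |f c| + 1 := by
      have := hrc.tendsto.abs
      have h2 : ∀ᶠ u in nhds |f c|, u ≤ |f c| + 1 :=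
        Filter.Tendsto.eventually_le_const (by linarith) tendsto_id
      exact this.eventually h2
    rw [eventually_nhdsWithin_iff, Metric.eventually_nhds_iff] at habs
    obtain ⟨ε, hε, hball⟩ := habs
    obtain ⟨⟨_, _⟩, M₀, hM₀⟩ := hcS
    set s₁ := min (c + ε / 2) t with hs₁
    have hs₁c : c < s₁ := lt_min (by linarith) hclt
    have hs₁S : s₁ ∈ S := by
      refine ⟨⟨hc0.trans hs₁c.le, min_le_right _ _⟩, max M₀ (|f c| + 1), fun r hr => ?_⟩
      rcases le_or_gt r c with h | h
      · exact (hM₀ r ⟨hr.1, h⟩).trans (le_max_left _ _)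
      · refine (hball ?_ h.le).trans (le_max_right _ _)
        rw [Real.dist_eq, abs_lt]
        have : r ≤ s₁ := hr.2
        have : r ≤ c + ε / 2 := this.trans (min_le_left _ _)
        constructor <;> linarith
    exact absurd (le_csSup hbdd hs₁S) (not_le.2 hs₁c)
  obtain ⟨_, M, hM⟩ := hcS
  exact ⟨M, by rwa [hcet] at hM⟩

lemma cadlag_intInt {f : ℝ → ℝ} (hf : Cadlag f) {t : ℝ} (ht : 0 ≤ t) :
    IntervalIntegrable f MeasureTheory.volume 0 t := by
  set g : ℝ → ℝ := fun s => f (max s 0) with hg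
  have hgrc : ∀ s : ℝ, ContinuousWithinAt g (Set.Ici s) s := by
    intro s
    rcases lt_or_ge s 0 with hs | hs
    · have hev : ∀ᶠ r in nhds s, g r = g s := by
        rw [Metric.eventually_nhds_iff]
        refine ⟨-s, by linarith, fun r hr => ?_⟩
        rw [Real.dist_eq, abs_lt] at hr
        have h1 : r < 0 := by linarith [hr.2]
        simp only [hg, max_eq_right h1.le, max_eq_right hs.le]
      exact Tendsto.congr' (by filter_upwards [nhdsWithin_le_nhds hev] with r hr using hr.symm)
        tendsto_const_nhds
    · have hmax : max s 0 = s := max_eq_left hs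
      have hcomp : ContinuousWithinAt (f ∘ fun r => max r 0) (Set.Ici s) s := by
        refine ContinuousWithinAt.comp (x := s) (t := Set.Ici s) ?_ ((continuous_id.max continuous_const).continuousWithinAt) ?_
        · rw [hmax]; exact hf.1 s hs
        · intro r hr
          have : s ≤ max r 0 := le_max_of_le_left hr
          exact this
      exact hcomp
  have hgm : Measurable g := measurable_of_rc hgrc
  obtain ⟨M, hM0, hM⟩ := cadlag_bdd hf t
  rw [intervalIntegrable_iff_integrableOn_Ioc_of_le ht]
  have hgint : MeasureTheory.IntegrableOn g (Set.Ioc 0 t) := by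
    refine ⟨hgm.aestronglyMeasurable.restrict, ?_⟩
    refine MeasureTheory.HasFiniteIntegral.restrict_of_bounded (C := M) measure_Ioc_lt_top ?_
    refine (MeasureTheory.ae_restrict_iff' measurableSet_Ioc).2 (Filter.Eventually.of_forall ?_)
    intro s hs
    have : g s = f s := by simp [hg, max_eq_left hs.1.le]
    rw [Real.norm_eq_abs, this]
    exact hM s ⟨hs.1.le, hs.2⟩
  refine hgint.congr_fun ?_ measurableSet_Ioc
  intro s hs
  simp [hg, max_eq_left hs.1.le]

lemma unif_nonneg (x : ℝ → ℝ) (t : ℝ) : 0 ≤ unif x t :=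
  Real.iSup_nonneg fun s => abs_nonneg _

lemma unif_le {x : ℝ → ℝ} {t M : ℝ} (ht : 0 ≤ t)
    (h : ∀ s ∈ Set.Icc (0:ℝ) t, |x s| ≤ M) : unif x t ≤ M := by
  have : Nonempty (Set.Icc (0:ℝ) t) := ⟨⟨0, le_rfl, ht⟩⟩
  exact ciSup_le fun s => h s s.2

lemma le_unif {x : ℝ → ℝ} {t M : ℝ} (h : ∀ s ∈ Set.Icc (0:ℝ) t, |x s| ≤ M)
    {s : ℝ} (hs : s ∈ Set.Icc (0:ℝ) t) : |x s| ≤ unif x t :=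
  le_ciSup (f := fun s : Set.Icc (0:ℝ) t => |x s.1|)
    ⟨M, by rintro v ⟨u, rfl⟩; exact h u u.2⟩ ⟨s, hs⟩

lemma unif_monoOn {x : ℝ → ℝ} {t M : ℝ} (h : ∀ s ∈ Set.Icc (0:ℝ) t, |x s| ≤ M) :
    MonotoneOn (unif x) (Set.Icc 0 t) := by
  intro r hr r' hr' hrr'
  refine unif_le hr.1 fun s hs => le_unif (fun u hu => h u ⟨hu.1, hu.2.trans hr'.2⟩)
    ⟨hs.1, hs.2.trans hrr'⟩

lemma psiR_nonneg (κ : ℝ) (x : ℝ → ℝ) (t : ℝ) : 0 ≤ psiR κ x t :=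
  Real.iSup_nonneg fun s => le_max_right _ _

lemma psiR_le {κ : ℝ} {x : ℝ → ℝ} {t M : ℝ} (ht : 0 ≤ t)
    (h : ∀ s ∈ Set.Icc (0:ℝ) t, max (x s - κ) 0 ≤ M) : psiR κ x t ≤ M := by
  have : Nonempty (Set.Icc (0:ℝ) t) := ⟨⟨0, le_rfl, ht⟩⟩
  exact ciSup_le fun s => h s s.2

lemma le_psiR {κ : ℝ} {x : ℝ → ℝ} {t M : ℝ} (h : ∀ s ∈ Set.Icc (0:ℝ) t, max (x s - κ) 0 ≤ M)
    {s : ℝ} (hs : s ∈ Set.Icc (0:ℝ) t) : max (x s - κ) 0 ≤ psiR κ x t :=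
  le_ciSup (f := fun s : Set.Icc (0:ℝ) t => max (x s.1 - κ) 0)
    ⟨M, by rintro v ⟨u, rfl⟩; exact h u u.2⟩ ⟨s, hs⟩

lemma psiR_monoOn {κ : ℝ} {x : ℝ → ℝ} {t M : ℝ}
    (h : ∀ s ∈ Set.Icc (0:ℝ) t, max (x s - κ) 0 ≤ M) :
    MonotoneOn (psiR κ x) (Set.Icc 0 t) := by
  intro r hr r' hr' hrr'
  refine psiR_le hr.1 fun s hs => le_psiR (fun u hu => h u ⟨hu.1, hu.2.trans hr'.2⟩)
    ⟨hs.1, hs.2.trans hrr'⟩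

lemma psiR_sub_le {κ : ℝ} {x x' : ℝ → ℝ} {r D M : ℝ} (hr : 0 ≤ r)
    (hD : ∀ s ∈ Set.Icc (0:ℝ) r, |x s - x' s| ≤ D)
    (hb : ∀ s ∈ Set.Icc (0:ℝ) r, max (x' s - κ) 0 ≤ M) :
    psiR κ x r ≤ psiR κ x' r + D := by
  have hD0 : 0 ≤ D := (abs_nonneg _).trans (hD 0 ⟨le_rfl, hr⟩)
  refine psiR_le hr fun s hs => ?_
  have h1 : max (x' s - κ) 0 ≤ psiR κ x' r := le_psiR hb hs
  have h2 : |x s - x' s| ≤ D := hD s hs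
  refine max_le ?_ (add_nonneg (psiR_nonneg _ _ _) hD0)
  have : x s - κ ≤ (x' s - κ) + |x s - x' s| := by
    have := le_abs_self (x s - x' s); linarith
  calc x s - κ ≤ (x' s - κ) + |x s - x' s| := this
    _ ≤ max (x' s - κ) 0 + D := add_le_add (le_max_left _ _) h2
    _ ≤ psiR κ x' r + D := add_le_add_left h1 _

lemma abs_psiR_sub {κ : ℝ} {x x' : ℝ → ℝ} {r D M : ℝ} (hr : 0 ≤ r)
    (hD : ∀ s ∈ Set.Icc (0:ℝ) r, |x s - x' s| ≤ D)
    (hbx : ∀ s ∈ Set.Icc (0:ℝ) r, |x s| ≤ M)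
    (hbx' : ∀ s ∈ Set.Icc (0:ℝ) r, |x' s| ≤ M) :
    |psiR κ x r - psiR κ x' r| ≤ D := by
  have hb : ∀ (z : ℝ → ℝ), (∀ s ∈ Set.Icc (0:ℝ) r, |z s| ≤ M) →
      ∀ s ∈ Set.Icc (0:ℝ) r, max (z s - κ) 0 ≤ max (M - κ) 0 := by
    intro z hz s hs
    refine max_le ?_ (le_max_right _ _)
    have := (abs_le.1 (hz s hs)).2
    exact le_max_of_le_left (by linarith)
  rw [abs_sub_le_iff]
  constructor
  · have := psiR_sub_le hr hD (hb x' hbx')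
    linarith
  · have := psiR_sub_le hr (fun s hs => by rw [abs_sub_comm]; exact hD s hs) (hb x hbx)
    linarith

lemma abs_phiR_sub {κ : ℝ} {x x' : ℝ → ℝ} {r D M : ℝ} (hr : 0 ≤ r)
    (hD : ∀ s ∈ Set.Icc (0:ℝ) r, |x s - x' s| ≤ D)
    (hbx : ∀ s ∈ Set.Icc (0:ℝ) r, |x s| ≤ M)
    (hbx' : ∀ s ∈ Set.Icc (0:ℝ) r, |x' s| ≤ M) :
    |phiR κ x r - phiR κ x' r| ≤ 2 * D := by
  have h1 : |x r - x' r| ≤ D := hD r ⟨hr, le_rfl⟩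
  have h2 : |psiR κ x r - psiR κ x' r| ≤ D := abs_psiR_sub hr hD hbx hbx'
  have : phiR κ x r - phiR κ x' r = (x r - x' r) - (psiR κ x r - psiR κ x' r) := by
    simp [phiR]; ring
  rw [this]
  calc |(x r - x' r) - (psiR κ x r - psiR κ x' r)| ≤ |x r - x' r| + |psiR κ x r - psiR κ x' r| :=
        abs_sub _ _
    _ ≤ 2 * D := by linarith

lemma abs_phiE_sub {B : ℝ≥0∞} {x x' : ℝ → ℝ} {r D M : ℝ} (hr : 0 ≤ r)
    (hD : ∀ s ∈ Set.Icc (0:ℝ) r, |x s - x' s| ≤ D)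
    (hbx : ∀ s ∈ Set.Icc (0:ℝ) r, |x s| ≤ M)
    (hbx' : ∀ s ∈ Set.Icc (0:ℝ) r, |x' s| ≤ M) :
    |phiE B x r - phiE B x' r| ≤ 2 * D := by
  have hD0 : 0 ≤ D := (abs_nonneg _).trans (hD 0 ⟨le_rfl, hr⟩)
  by_cases hB : B = ⊤
  · simp only [phiE, hB, if_true, if_pos rfl]
    have := hD r ⟨hr, le_rfl⟩
    linarith
  · simp only [phiE, if_neg hB]
    exact abs_phiR_sub hr hD hbx hbx'

lemma abs_phiR_le {κ : ℝ} (hκ : 0 ≤ κ) {x : ℝ → ℝ} {t M : ℝ}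
    (hb : ∀ s ∈ Set.Icc (0:ℝ) t, |x s| ≤ M) :
    ∀ r ∈ Set.Icc (0:ℝ) t, |phiR κ x r| ≤ 2 * M := by
  intro r hr
  have hM0 : 0 ≤ M := (abs_nonneg _).trans (hb 0 ⟨le_rfl, hr.1.trans hr.2⟩)
  have h1 : |x r| ≤ M := hb r hr
  have h2 : psiR κ x r ≤ M := by
    refine psiR_le hr.1 fun s hs => max_le ?_ hM0
    have := (abs_le.1 (hb s ⟨hs.1, hs.2.trans hr.2⟩)).2
    linarith
  have h3 : 0 ≤ psiR κ x r := psiR_nonneg _ _ _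
  rw [phiR, abs_sub_le_iff]
  constructor
  · have := (abs_le.1 h1).2; linarith
  · have := (abs_le.1 h1).1; linarith

lemma abs_phiE_le {B : ℝ≥0∞} {x : ℝ → ℝ} {t M : ℝ}
    (hb : ∀ s ∈ Set.Icc (0:ℝ) t, |x s| ≤ M) :
    ∀ r ∈ Set.Icc (0:ℝ) t, |phiE B x r| ≤ 2 * M := by
  intro r hr
  have hM0 : 0 ≤ M := (abs_nonneg _).trans (hb 0 ⟨le_rfl, hr.1.trans hr.2⟩)
  by_cases hB : B = ⊤
  · simp only [phiE, hB, if_true, if_pos rfl]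
    exact (hb r hr).trans (by linarith)
  · simp only [phiE, if_neg hB]
    exact abs_phiR_le ENNReal.toReal_nonneg hb r hr

lemma phiR_intInt {κ : ℝ} {x : ℝ → ℝ} (hx : Cadlag x) {t : ℝ} (ht : 0 ≤ t) :
    IntervalIntegrable (phiR κ x) MeasureTheory.volume 0 t := by
  obtain ⟨M, hM0, hM⟩ := cadlag_bdd hx t
  have hpsi : MonotoneOn (psiR κ x) (Set.Icc 0 t) := by
    refine psiR_monoOn (M := M + |κ|) fun s hs => max_le ?_ (by positivity)
    have := (abs_le.1 (hM s hs)).2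
    have := le_abs_self κ
    have := neg_abs_le κ
    linarith
  have h1 : IntervalIntegrable (psiR κ x) MeasureTheory.volume 0 t := by
    apply MonotoneOn.intervalIntegrable
    rwa [Set.uIcc_of_le ht]
  exact (cadlag_intInt hx ht).sub h1

lemma phiE_intInt {B : ℝ≥0∞} {x : ℝ → ℝ} (hx : Cadlag x) {t : ℝ} (ht : 0 ≤ t) :
    IntervalIntegrable (phiE B x) MeasureTheory.volume 0 t := by
  by_cases hB : B = ⊤
  · simp only [phiE, hB, if_true, if_pos rfl]
    exact cadlag_intInt hx ht
  · simp only [phiE, if_neg hB]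
    exact phiR_intInt hx ht

lemma gronwall_aux {h : ℝ → ℝ} {t A : ℝ} (ht : 0 ≤ t) (hA : 0 ≤ A)
    (hmono : MonotoneOn h (Set.Icc 0 t))
    (hineq : ∀ r ∈ Set.Icc (0:ℝ) t, h r ≤ A + 6 * ∫ s in (0:ℝ)..r, h s) :
    ∀ r ∈ Set.Icc (0:ℝ) t, h r ≤ A * Real.exp (6 * r) := by
  set M := h t with hM
  have hint : ∀ r ∈ Set.Icc (0:ℝ) t, IntervalIntegrable h MeasureTheory.volume 0 r := by
    intro r hr
    apply MonotoneOn.intervalIntegrable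
    rw [Set.uIcc_of_le hr.1]
    exact hmono.mono (Set.Icc_subset_Icc le_rfl hr.2)
  have key : ∀ n : ℕ, ∀ r ∈ Set.Icc (0:ℝ) t,
      h r ≤ A * ∑ k ∈ Finset.range n, (6 * r) ^ k / k.factorial
        + M * (6 * r) ^ n / n.factorial := by
    intro n
    induction n with
    | zero =>
      intro r hr
      simpa using hmono hr ⟨ht, le_rfl⟩ hr.2
    | succ n ih =>
      intro r hr
      have hcont : Continuous fun s : ℝ =>
          A * ∑ k ∈ Finset.range n, (6 * s) ^ k / k.factorial + M * (6 * s) ^ n / n.factorial := by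
        fun_prop
      have hstep : (∫ s in (0:ℝ)..r, h s) ≤
          ∫ s in (0:ℝ)..r,
            (A * ∑ k ∈ Finset.range n, (6 * s) ^ k / k.factorial
              + M * (6 * s) ^ n / n.factorial) := by
        refine intervalIntegral.integral_mono_on hr.1 (hint r hr) (hcont.intervalIntegrable _ _) ?_
        intro s hs
        exact ih s ⟨hs.1, hs.2.trans hr.2⟩
      have hcomp : ∀ k : ℕ, (∫ s in (0:ℝ)..r, (6 * s) ^ k / k.factorial)
          = (6 * r) ^ (k + 1) / ((k + 1).factorial * 6) := by
        intro k
        have : ∀ s : ℝ, (6 * s) ^ k / k.factorial = (6 ^ k / k.factorial) * s ^ k := by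
          intro s; rw [mul_pow]; ring
        simp only [this]
        rw [intervalIntegral.integral_const_mul, integral_pow]
        rw [mul_pow, Nat.factorial_succ]
        push_cast
        have hk : (k.factorial : ℝ) ≠ 0 := Nat.cast_ne_zero.2 k.factorial_ne_zero
        field_simp
        ring
      have hcalc : (∫ s in (0:ℝ)..r,
            (A * ∑ k ∈ Finset.range n, (6 * s) ^ k / k.factorial
              + M * (6 * s) ^ n / n.factorial))
          = A * ∑ k ∈ Finset.range n, (6 * r) ^ (k + 1) / ((k + 1).factorial * 6)
            + M * ((6 * r) ^ (n + 1) / ((n + 1).factorial * 6)) := by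
        have h1 : ∀ k : ℕ, IntervalIntegrable (fun s : ℝ => (6 * s) ^ k / k.factorial)
            MeasureTheory.volume 0 r := fun k =>
          (by fun_prop : Continuous fun s : ℝ => (6 * s) ^ k / (k.factorial : ℝ)).intervalIntegrable _ _
        rw [intervalIntegral.integral_add, intervalIntegral.integral_const_mul,
          intervalIntegral.integral_finset_sum]
        · congr 1
          · congr 1
            exact Finset.sum_congr rfl fun k _ => hcomp k
          · have : (fun s : ℝ => M * (6 * s) ^ n / n.factorial)
                = fun s : ℝ => M * ((6 * s) ^ n / n.factorial) := by
              funext s; ring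
            rw [this, intervalIntegral.integral_const_mul, hcomp n]
        · intro k _; exact h1 k
        · apply IntervalIntegrable.const_mul
          exact (by fun_prop : Continuous fun s : ℝ => ∑ k ∈ Finset.range n, (6 * s) ^ k / k.factorial).intervalIntegrable _ _
        · have : (fun s : ℝ => M * (6 * s) ^ n / n.factorial)
              = fun s : ℝ => M * ((6 * s) ^ n / n.factorial) := by
            funext s; ring
          rw [this]; exact (h1 n).const_mul M
      have := hineq r hr
      have hfin : h r ≤ A + 6 * (A * ∑ k ∈ Finset.range n, (6 * r) ^ (k + 1) / ((k + 1).factorial * 6)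
            + M * ((6 * r) ^ (n + 1) / ((n + 1).factorial * 6))) := by
        rw [← hcalc]
        have h6 : (6:ℝ) * (∫ s in (0:ℝ)..r, h s) ≤ 6 * ∫ s in (0:ℝ)..r,
            (A * ∑ k ∈ Finset.range n, (6 * s) ^ k / k.factorial
              + M * (6 * s) ^ n / n.factorial) := by linarith
        linarith
      refine hfin.trans (le_of_eq ?_)
      have e1 : ∀ k : ℕ, (6:ℝ) * ((6 * r) ^ (k + 1) / ((k + 1).factorial * 6))
          = (6 * r) ^ (k + 1) / ((k + 1).factorial : ℝ) := by
        intro k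
        have hk : ((k + 1).factorial : ℝ) ≠ 0 := Nat.cast_ne_zero.2 (k + 1).factorial_ne_zero
        field_simp
      have e2 : ∑ k ∈ Finset.range (n + 1), (6 * r) ^ k / (k.factorial : ℝ)
          = (∑ k ∈ Finset.range n, (6 * r) ^ (k + 1) / ((k + 1).factorial : ℝ)) + 1 := by
        rw [Finset.sum_range_succ' (fun k => (6 * r) ^ k / (k.factorial : ℝ)) n]
        norm_num
      have e3 : (6:ℝ) * (A * ∑ k ∈ Finset.range n, (6 * r) ^ (k + 1) / ((k + 1).factorial * 6))
          = A * ∑ k ∈ Finset.range n, (6 * r) ^ (k + 1) / ((k + 1).factorial : ℝ) := by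
        rw [mul_left_comm]
        congr 1
        rw [Finset.mul_sum]
        exact Finset.sum_congr rfl fun k _ => e1 k
      have e4 : (6:ℝ) * (M * ((6 * r) ^ (n + 1) / ((n + 1).factorial * 6)))
          = M * ((6 * r) ^ (n + 1) / ((n + 1).factorial : ℝ)) := by
        rw [mul_left_comm, e1 n]
      rw [e2, mul_add, e3, e4]
      ring
  intro r hr
  have hlim : Filter.Tendsto
      (fun n : ℕ => A * Real.exp (6 * r) + M * (6 * r) ^ n / n.factorial) Filter.atTop
      (nhds (A * Real.exp (6 * r))) := by
    have h1 : Filter.Tendsto (fun n : ℕ => ((6 * r) ^ n / n.factorial : ℝ)) Filter.atTop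
        (nhds 0) := FloorSemiring.tendsto_pow_div_factorial_atTop (6 * r)
    have := Filter.Tendsto.add (tendsto_const_nhds (x := A * Real.exp (6 * r)))
      (h1.const_mul M)
    simpa [mul_div_assoc] using this
  refine ge_of_tendsto hlim (Filter.Eventually.of_forall fun n => ?_)
  have h1 := key n r hr
  have h2 : A * ∑ k ∈ Finset.range n, (6 * r) ^ k / k.factorial ≤ A * Real.exp (6 * r) := by
    refine mul_le_mul_of_nonneg_left ?_ hA
    have h60 : (0:ℝ) ≤ 6 * r := by linarith [hr.1]
    exact Real.sum_le_exp_of_nonneg h60 n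
  linarith

/-- **Quantitative stability of the unreflected auxiliary system.**  Let `w`
solve the system for data `(B,b,y)` and `wⁿ` solve it for data `(Bⁿ,bⁿ,yⁿ)`.
Fix `t ≥ 0` and `δ > 0` with
`|bⁿ − b| + ‖yⁿ − y‖_t + ‖φ_{Bⁿ}(w₂) − φ_B(w₂)‖_t < δ`.  Then
`‖w₁ⁿ − w₁‖_t ≤ 2δ(1+t)e^{6t}` and `‖w₂ⁿ − w₂‖_t ≤ 4δ(1+t)e^{6t}`. -/
theorem aux_system_stability
    (B Bn : ℝ≥0∞) (b₁ b₂ bn₁ bn₂ : ℝ) (y₁ y₂ yn₁ yn₂ : ℝ → ℝ)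
    (hy₁ : Cadlag y₁) (hy₂ : Cadlag y₂) (hyn₁ : Cadlag yn₁) (hyn₂ : Cadlag yn₂)
    (w₁ w₂ wn₁ wn₂ : ℝ → ℝ)
    (hsol : IsAuxSolution B b₁ b₂ y₁ y₂ w₁ w₂)
    (hsoln : IsAuxSolution Bn bn₁ bn₂ yn₁ yn₂ wn₁ wn₂)
    (t δ : ℝ) (ht : 0 ≤ t) (hδ : 0 < δ)
    (hclose : max |bn₁ - b₁| |bn₂ - b₂| +
        max (unif (fun s => yn₁ s - y₁ s) t) (unif (fun s => yn₂ s - y₂ s) t) +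
        unif (fun s => phiE Bn w₂ s - phiE B w₂ s) t < δ) :
    unif (fun s => wn₁ s - w₁ s) t ≤ 2 * δ * (1 + t) * Real.exp (6 * t) ∧
    unif (fun s => wn₂ s - w₂ s) t ≤ 4 * δ * (1 + t) * Real.exp (6 * t) := by
  obtain ⟨hw₁c, hw₂c, heq1, heq2, -⟩ := hsol
  obtain ⟨hwn₁c, hwn₂c, heqn1, heqn2, -⟩ := hsoln
  -- uniform bound M for all eight functions on [0,t]
  obtain ⟨M1, hM10, hb1⟩ := cadlag_bdd hw₁c t
  obtain ⟨M2, hM20, hb2⟩ := cadlag_bdd hw₂c t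
  obtain ⟨M3, hM30, hb3⟩ := cadlag_bdd hwn₁c t
  obtain ⟨M4, hM40, hb4⟩ := cadlag_bdd hwn₂c t
  obtain ⟨M5, hM50, hb5⟩ := cadlag_bdd hy₁ t
  obtain ⟨M6, hM60, hb6⟩ := cadlag_bdd hy₂ t
  obtain ⟨M7, hM70, hb7⟩ := cadlag_bdd hyn₁ t
  obtain ⟨M8, hM80, hb8⟩ := cadlag_bdd hyn₂ t
  set M : ℝ := max (max (max M1 M2) (max M3 M4)) (max (max M5 M6) (max M7 M8)) with hMdef
  have hM0 : 0 ≤ M := hM10.trans (le_max_of_le_left (le_max_of_le_left (le_max_left _ _)))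
  have hbw₁ : ∀ s ∈ Set.Icc (0:ℝ) t, |w₁ s| ≤ M := fun s hs =>
    (hb1 s hs).trans (le_max_of_le_left (le_max_of_le_left (le_max_left _ _)))
  have hbw₂ : ∀ s ∈ Set.Icc (0:ℝ) t, |w₂ s| ≤ M := fun s hs =>
    (hb2 s hs).trans (le_max_of_le_left (le_max_of_le_left (le_max_right _ _)))
  have hbwn₁ : ∀ s ∈ Set.Icc (0:ℝ) t, |wn₁ s| ≤ M := fun s hs =>
    (hb3 s hs).trans (le_max_of_le_left (le_max_of_le_right (le_max_left _ _)))
  have hbwn₂ : ∀ s ∈ Set.Icc (0:ℝ) t, |wn₂ s| ≤ M := fun s hs =>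
    (hb4 s hs).trans (le_max_of_le_left (le_max_of_le_right (le_max_right _ _)))
  have hby : ∀ s ∈ Set.Icc (0:ℝ) t, |yn₁ s - y₁ s| ≤ 2 * M := by
    intro s hs
    have h1 : |yn₁ s| ≤ M := (hb7 s hs).trans
      (le_max_of_le_right (le_max_of_le_right (le_max_left _ _)))
    have h2 : |y₁ s| ≤ M := (hb5 s hs).trans
      (le_max_of_le_right (le_max_of_le_left (le_max_left _ _)))
    calc |yn₁ s - y₁ s| ≤ |yn₁ s| + |y₁ s| := abs_sub _ _
      _ ≤ 2 * M := by linarith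
  have hby₂ : ∀ s ∈ Set.Icc (0:ℝ) t, |yn₂ s - y₂ s| ≤ 2 * M := by
    intro s hs
    have h1 : |yn₂ s| ≤ M := (hb8 s hs).trans
      (le_max_of_le_right (le_max_of_le_right (le_max_right _ _)))
    have h2 : |y₂ s| ≤ M := (hb6 s hs).trans
      (le_max_of_le_right (le_max_of_le_left (le_max_right _ _)))
    calc |yn₂ s - y₂ s| ≤ |yn₂ s| + |y₂ s| := abs_sub _ _
      _ ≤ 2 * M := by linarith
  -- abbreviations
  set a : ℝ := max |bn₁ - b₁| |bn₂ - b₂| with hadef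
  set c : ℝ := max (unif (fun s => yn₁ s - y₁ s) t) (unif (fun s => yn₂ s - y₂ s) t) with hcdef
  set d : ℝ := unif (fun s => phiE Bn w₂ s - phiE B w₂ s) t with hddef
  have ha0 : 0 ≤ a := (abs_nonneg _).trans (le_max_left _ _)
  have hc0 : 0 ≤ c := (unif_nonneg _ _).trans (le_max_left _ _)
  have hd0 : 0 ≤ d := unif_nonneg _ _
  set K : ℝ := a + c + t * d with hKdef
  have hK0 : 0 ≤ K := by positivity
  have hdδ : d ≤ δ := by linarith [hclose]
  have hKδ : K ≤ δ * (1 + t) := by nlinarith [mul_le_mul_of_nonneg_left hdδ ht]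
  -- the difference sup processes
  set g₁ : ℝ → ℝ := fun r => unif (fun s => wn₁ s - w₁ s) r with hg₁def
  set g₂ : ℝ → ℝ := fun r => unif (fun s => wn₂ s - w₂ s) r with hg₂def
  have hD1 : ∀ s ∈ Set.Icc (0:ℝ) t, |wn₁ s - w₁ s| ≤ 2 * M := by
    intro s hs
    calc |wn₁ s - w₁ s| ≤ |wn₁ s| + |w₁ s| := abs_sub _ _
      _ ≤ 2 * M := by linarith [hbwn₁ s hs, hbw₁ s hs]
  have hD2 : ∀ s ∈ Set.Icc (0:ℝ) t, |wn₂ s - w₂ s| ≤ 2 * M := by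
    intro s hs
    calc |wn₂ s - w₂ s| ≤ |wn₂ s| + |w₂ s| := abs_sub _ _
      _ ≤ 2 * M := by linarith [hbwn₂ s hs, hbw₂ s hs]
  have hg₁mono : MonotoneOn g₁ (Set.Icc 0 t) := unif_monoOn hD1
  have hg₂mono : MonotoneOn g₂ (Set.Icc 0 t) := unif_monoOn hD2
  have hg₁nn : ∀ r : ℝ, 0 ≤ g₁ r := fun r => unif_nonneg _ _
  have hg₂nn : ∀ r : ℝ, 0 ≤ g₂ r := fun r => unif_nonneg _ _
  have habs1 : ∀ r ∈ Set.Icc (0:ℝ) t, ∀ s ∈ Set.Icc (0:ℝ) r, |wn₁ s - w₁ s| ≤ g₁ r :=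
    fun r hr s hs => le_unif (fun u hu => hD1 u ⟨hu.1, hu.2.trans hr.2⟩) hs
  have habs2 : ∀ r ∈ Set.Icc (0:ℝ) t, ∀ s ∈ Set.Icc (0:ℝ) r, |wn₂ s - w₂ s| ≤ g₂ r :=
    fun r hr s hs => le_unif (fun u hu => hD2 u ⟨hu.1, hu.2.trans hr.2⟩) hs
  have hintg₁ : ∀ r ∈ Set.Icc (0:ℝ) t, IntervalIntegrable g₁ MeasureTheory.volume 0 r := by
    intro r hr
    apply MonotoneOn.intervalIntegrable
    rw [Set.uIcc_of_le hr.1]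
    exact hg₁mono.mono (Set.Icc_subset_Icc le_rfl hr.2)
  have hintg₂ : ∀ r ∈ Set.Icc (0:ℝ) t, IntervalIntegrable g₂ MeasureTheory.volume 0 r := by
    intro r hr
    apply MonotoneOn.intervalIntegrable
    rw [Set.uIcc_of_le hr.1]
    exact hg₂mono.mono (Set.Icc_subset_Icc le_rfl hr.2)
  have hinth : ∀ r ∈ Set.Icc (0:ℝ) t,
      IntervalIntegrable (fun u => 2 * (g₁ u + g₂ u)) MeasureTheory.volume 0 r :=
    fun r hr => (((hintg₁ r hr).add (hintg₂ r hr)).const_mul 2)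
  -- pointwise bound for φ-difference
  have hdpt : ∀ s ∈ Set.Icc (0:ℝ) t, |phiE Bn w₂ s - phiE B w₂ s| ≤ d := by
    intro s hs
    show |phiE Bn w₂ s - phiE B w₂ s| ≤ unif (fun s => phiE Bn w₂ s - phiE B w₂ s) t
    refine le_unif (x := fun s => phiE Bn w₂ s - phiE B w₂ s) (M := 4 * M) (fun u hu => ?_) hs
    have h1 := abs_phiE_le (B := Bn) hbw₂ u hu
    have h2 := abs_phiE_le (B := B) hbw₂ u hu
    calc |phiE Bn w₂ u - phiE B w₂ u| ≤ |phiE Bn w₂ u| + |phiE B w₂ u| := abs_sub _ _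
      _ ≤ 4 * M := by linarith
  -- integrands
  set F : ℝ → ℝ := fun s => -(phiR 0 w₁ s) + phiE B w₂ s with hFdef
  set Fn : ℝ → ℝ := fun s => -(phiR 0 wn₁ s) + phiE Bn wn₂ s with hFndef
  have hres : ∀ {f : ℝ → ℝ}, IntervalIntegrable f MeasureTheory.volume 0 t →
      ∀ s ∈ Set.Icc (0:ℝ) t, IntervalIntegrable f MeasureTheory.volume 0 s := by
    intro f hf s hs
    refine hf.mono_set ?_
    rw [Set.uIcc_of_le hs.1, Set.uIcc_of_le ht]
    exact Set.Icc_subset_Icc le_rfl hs.2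
  have hFint : IntervalIntegrable F MeasureTheory.volume 0 t :=
    ((phiR_intInt hw₁c ht).neg).add (phiE_intInt hw₂c ht)
  have hFnint : IntervalIntegrable Fn MeasureTheory.volume 0 t :=
    ((phiR_intInt hwn₁c ht).neg).add (phiE_intInt hwn₂c ht)
  -- pointwise bound on the difference of integrands
  have hG : ∀ u ∈ Set.Icc (0:ℝ) t, |Fn u - F u| ≤ 2 * (g₁ u + g₂ u) + d := by
    intro u hu
    have hbw₁' : ∀ v ∈ Set.Icc (0:ℝ) u, |w₁ v| ≤ M := fun v hv =>
      hbw₁ v ⟨hv.1, hv.2.trans hu.2⟩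
    have hbwn₁' : ∀ v ∈ Set.Icc (0:ℝ) u, |wn₁ v| ≤ M := fun v hv =>
      hbwn₁ v ⟨hv.1, hv.2.trans hu.2⟩
    have hbw₂' : ∀ v ∈ Set.Icc (0:ℝ) u, |w₂ v| ≤ M := fun v hv =>
      hbw₂ v ⟨hv.1, hv.2.trans hu.2⟩
    have hbwn₂' : ∀ v ∈ Set.Icc (0:ℝ) u, |wn₂ v| ≤ M := fun v hv =>
      hbwn₂ v ⟨hv.1, hv.2.trans hu.2⟩
    have t1 : |phiR 0 wn₁ u - phiR 0 w₁ u| ≤ 2 * g₁ u :=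
      abs_phiR_sub hu.1 (habs1 u hu) hbwn₁' hbw₁'
    have t2 : |phiE Bn wn₂ u - phiE Bn w₂ u| ≤ 2 * g₂ u :=
      abs_phiE_sub hu.1 (habs2 u hu) hbwn₂' hbw₂'
    have t3 : |phiE Bn w₂ u - phiE B w₂ u| ≤ d := hdpt u hu
    have e : Fn u - F u = -(phiR 0 wn₁ u - phiR 0 w₁ u)
        + ((phiE Bn wn₂ u - phiE Bn w₂ u) + (phiE Bn w₂ u - phiE B w₂ u)) := by
      simp only [hFdef, hFndef]; ring
    rw [e]
    calc |-(phiR 0 wn₁ u - phiR 0 w₁ u)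
        + ((phiE Bn wn₂ u - phiE Bn w₂ u) + (phiE Bn w₂ u - phiE B w₂ u))|
        ≤ |-(phiR 0 wn₁ u - phiR 0 w₁ u)|
          + |(phiE Bn wn₂ u - phiE Bn w₂ u) + (phiE Bn w₂ u - phiE B w₂ u)| := abs_add_le _ _
      _ ≤ |-(phiR 0 wn₁ u - phiR 0 w₁ u)|
          + (|phiE Bn wn₂ u - phiE Bn w₂ u| + |phiE Bn w₂ u - phiE B w₂ u|) := by
            linarith [abs_add_le (phiE Bn wn₂ u - phiE Bn w₂ u) (phiE Bn w₂ u - phiE B w₂ u)]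
      _ ≤ 2 * (g₁ u + g₂ u) + d := by rw [abs_neg]; linarith
  -- first estimate
  have est1 : ∀ r ∈ Set.Icc (0:ℝ) t,
      g₁ r ≤ K + ∫ s in (0:ℝ)..r, 2 * (g₁ s + g₂ s) := by
    intro r hr
    refine unif_le hr.1 fun s hs => ?_
    have hs' : s ∈ Set.Icc (0:ℝ) t := ⟨hs.1, hs.2.trans hr.2⟩
    rw [heqn1 s hs.1, heq1 s hs.1]
    have hsub : (∫ u in (0:ℝ)..s, Fn u) - (∫ u in (0:ℝ)..s, F u)
        = ∫ u in (0:ℝ)..s, (Fn u - F u) :=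
      (intervalIntegral.integral_sub (hres hFnint s hs') (hres hFint s hs')).symm
    have hrhsint : IntervalIntegrable (fun u => 2 * (g₁ u + g₂ u) + d)
        MeasureTheory.volume 0 s := (hinth s hs').add intervalIntegrable_const
    have habsint : |∫ u in (0:ℝ)..s, (Fn u - F u)|
        ≤ ∫ u in (0:ℝ)..s, (2 * (g₁ u + g₂ u) + d) := by
      refine (intervalIntegral.abs_integral_le_integral_abs hs.1).trans ?_
      refine intervalIntegral.integral_mono_on hs.1
        ((hres hFnint s hs').sub (hres hFint s hs')).abs hrhsint ?_
      intro u hu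
      exact hG u ⟨hu.1, hu.2.trans hs'.2⟩
    have hsplit : (∫ u in (0:ℝ)..s, (2 * (g₁ u + g₂ u) + d))
        = (∫ u in (0:ℝ)..s, 2 * (g₁ u + g₂ u)) + s * d := by
      rw [intervalIntegral.integral_add (hinth s hs') intervalIntegrable_const,
        intervalIntegral.integral_const]
      simp [smul_eq_mul]
    have hmonoint : (∫ u in (0:ℝ)..s, 2 * (g₁ u + g₂ u))
        ≤ ∫ u in (0:ℝ)..r, 2 * (g₁ u + g₂ u) := by
      refine intervalIntegral.integral_mono_interval le_rfl hs.1 hs.2 ?_ (hinth r hr)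
      refine Filter.Eventually.of_forall fun u => ?_
      have := hg₁nn u; have := hg₂nn u; positivity
    have hb : |bn₁ - b₁| ≤ a := le_max_left _ _
    have hy : |yn₁ s - y₁ s| ≤ c := (le_unif hby hs').trans (le_max_left _ _)
    have hsd : s * d ≤ t * d := mul_le_mul_of_nonneg_right hs'.2 hd0
    have e : (bn₁ + yn₁ s + ∫ u in (0:ℝ)..s, Fn u) - (b₁ + y₁ s + ∫ u in (0:ℝ)..s, F u)
        = (bn₁ - b₁) + ((yn₁ s - y₁ s)
            + ((∫ u in (0:ℝ)..s, Fn u) - ∫ u in (0:ℝ)..s, F u)) := by ring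
    rw [e, hsub]
    calc |(bn₁ - b₁) + ((yn₁ s - y₁ s) + ∫ u in (0:ℝ)..s, (Fn u - F u))|
        ≤ |bn₁ - b₁| + (|yn₁ s - y₁ s| + |∫ u in (0:ℝ)..s, (Fn u - F u)|) := by
          refine (abs_add_le _ _).trans ?_
          linarith [abs_add_le (yn₁ s - y₁ s) (∫ u in (0:ℝ)..s, (Fn u - F u))]
      _ ≤ K + ∫ u in (0:ℝ)..r, 2 * (g₁ u + g₂ u) := by
          rw [hKdef]
          have := habsint
          rw [hsplit] at this
          linarith
  -- second estimate
  have est2 : ∀ r ∈ Set.Icc (0:ℝ) t,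
      g₂ r ≤ K + g₁ r + ∫ s in (0:ℝ)..r, 2 * (g₁ s + g₂ s) := by
    intro r hr
    refine unif_le hr.1 fun s hs => ?_
    have hs' : s ∈ Set.Icc (0:ℝ) t := ⟨hs.1, hs.2.trans hr.2⟩
    rw [heqn2 s hs.1, heq2 s hs.1]
    have hGint : IntervalIntegrable (fun u => phiE Bn wn₂ u - phiE B w₂ u)
        MeasureTheory.volume 0 s :=
      (hres (phiE_intInt hwn₂c ht) s hs').sub (hres (phiE_intInt hw₂c ht) s hs')
    have hsub : (∫ u in (0:ℝ)..s, -(phiE Bn wn₂ u)) - (∫ u in (0:ℝ)..s, -(phiE B w₂ u))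
        = -∫ u in (0:ℝ)..s, (phiE Bn wn₂ u - phiE B w₂ u) := by
      rw [intervalIntegral.integral_neg, intervalIntegral.integral_neg,
        intervalIntegral.integral_sub (hres (phiE_intInt hwn₂c ht) s hs')
          (hres (phiE_intInt hw₂c ht) s hs')]
      ring
    have hG2 : ∀ u ∈ Set.Icc (0:ℝ) s, |phiE Bn wn₂ u - phiE B w₂ u|
        ≤ 2 * (g₁ u + g₂ u) + d := by
      intro u hu
      have hu' : u ∈ Set.Icc (0:ℝ) t := ⟨hu.1, hu.2.trans hs'.2⟩
      have hbw₂' : ∀ v ∈ Set.Icc (0:ℝ) u, |w₂ v| ≤ M := fun v hv =>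
        hbw₂ v ⟨hv.1, hv.2.trans hu'.2⟩
      have hbwn₂' : ∀ v ∈ Set.Icc (0:ℝ) u, |wn₂ v| ≤ M := fun v hv =>
        hbwn₂ v ⟨hv.1, hv.2.trans hu'.2⟩
      have t2 : |phiE Bn wn₂ u - phiE Bn w₂ u| ≤ 2 * g₂ u :=
        abs_phiE_sub hu'.1 (habs2 u hu') hbwn₂' hbw₂'
      have t3 : |phiE Bn w₂ u - phiE B w₂ u| ≤ d := hdpt u hu'
      have e : phiE Bn wn₂ u - phiE B w₂ u
          = (phiE Bn wn₂ u - phiE Bn w₂ u) + (phiE Bn w₂ u - phiE B w₂ u) := by ring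
      rw [e]
      have := hg₁nn u
      calc |(phiE Bn wn₂ u - phiE Bn w₂ u) + (phiE Bn w₂ u - phiE B w₂ u)|
          ≤ |phiE Bn wn₂ u - phiE Bn w₂ u| + |phiE Bn w₂ u - phiE B w₂ u| := abs_add_le _ _
        _ ≤ 2 * (g₁ u + g₂ u) + d := by linarith
    have hrhsint : IntervalIntegrable (fun u => 2 * (g₁ u + g₂ u) + d)
        MeasureTheory.volume 0 s := (hinth s hs').add intervalIntegrable_const
    have habsint : |∫ u in (0:ℝ)..s, (phiE Bn wn₂ u - phiE B w₂ u)|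
        ≤ ∫ u in (0:ℝ)..s, (2 * (g₁ u + g₂ u) + d) := by
      refine (intervalIntegral.abs_integral_le_integral_abs hs.1).trans ?_
      exact intervalIntegral.integral_mono_on hs.1 hGint.abs hrhsint hG2
    have hsplit : (∫ u in (0:ℝ)..s, (2 * (g₁ u + g₂ u) + d))
        = (∫ u in (0:ℝ)..s, 2 * (g₁ u + g₂ u)) + s * d := by
      rw [intervalIntegral.integral_add (hinth s hs') intervalIntegrable_const,
        intervalIntegral.integral_const]
      simp [smul_eq_mul]
    have hmonoint : (∫ u in (0:ℝ)..s, 2 * (g₁ u + g₂ u))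
        ≤ ∫ u in (0:ℝ)..r, 2 * (g₁ u + g₂ u) := by
      refine intervalIntegral.integral_mono_interval le_rfl hs.1 hs.2 ?_ (hinth r hr)
      refine Filter.Eventually.of_forall fun u => ?_
      have := hg₁nn u; have := hg₂nn u; positivity
    have hpsi : |psiR 0 wn₁ s - psiR 0 w₁ s| ≤ g₁ r := by
      have hbw₁' : ∀ v ∈ Set.Icc (0:ℝ) s, |w₁ v| ≤ M := fun v hv =>
        hbw₁ v ⟨hv.1, hv.2.trans hs'.2⟩
      have hbwn₁' : ∀ v ∈ Set.Icc (0:ℝ) s, |wn₁ v| ≤ M := fun v hv =>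
        hbwn₁ v ⟨hv.1, hv.2.trans hs'.2⟩
      have h1 : |psiR 0 wn₁ s - psiR 0 w₁ s| ≤ g₁ s :=
        abs_psiR_sub hs.1 (habs1 s hs') hbwn₁' hbw₁'
      exact h1.trans (hg₁mono hs' hr (hs.2))
    have hb : |bn₂ - b₂| ≤ a := le_max_right _ _
    have hy : |yn₂ s - y₂ s| ≤ c := (le_unif hby₂ hs').trans (le_max_right _ _)
    have hsd : s * d ≤ t * d := mul_le_mul_of_nonneg_right hs'.2 hd0
    have e : (bn₂ + yn₂ s + psiR 0 wn₁ s + ∫ u in (0:ℝ)..s, -(phiE Bn wn₂ u))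
        - (b₂ + y₂ s + psiR 0 w₁ s + ∫ u in (0:ℝ)..s, -(phiE B w₂ u))
        = (bn₂ - b₂) + ((yn₂ s - y₂ s) + ((psiR 0 wn₁ s - psiR 0 w₁ s)
            + ((∫ u in (0:ℝ)..s, -(phiE Bn wn₂ u)) - ∫ u in (0:ℝ)..s, -(phiE B w₂ u)))) := by
      ring
    rw [e, hsub]
    have habsneg : |-∫ u in (0:ℝ)..s, (phiE Bn wn₂ u - phiE B w₂ u)|
        = |∫ u in (0:ℝ)..s, (phiE Bn wn₂ u - phiE B w₂ u)| := abs_neg _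
    calc |(bn₂ - b₂) + ((yn₂ s - y₂ s) + ((psiR 0 wn₁ s - psiR 0 w₁ s)
            + -∫ u in (0:ℝ)..s, (phiE Bn wn₂ u - phiE B w₂ u)))|
        ≤ |bn₂ - b₂| + (|yn₂ s - y₂ s| + (|psiR 0 wn₁ s - psiR 0 w₁ s|
            + |∫ u in (0:ℝ)..s, (phiE Bn wn₂ u - phiE B w₂ u)|)) := by
          refine (abs_add_le _ _).trans ?_
          have h1 := abs_add_le (yn₂ s - y₂ s) ((psiR 0 wn₁ s - psiR 0 w₁ s)
            + -∫ u in (0:ℝ)..s, (phiE Bn wn₂ u - phiE B w₂ u))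
          have h2 := abs_add_le (psiR 0 wn₁ s - psiR 0 w₁ s)
            (-∫ u in (0:ℝ)..s, (phiE Bn wn₂ u - phiE B w₂ u))
          linarith [habsneg]
      _ ≤ K + g₁ r + ∫ u in (0:ℝ)..r, 2 * (g₁ u + g₂ u) := by
          rw [hKdef]
          have := habsint
          rw [hsplit] at this
          linarith
  -- Gronwall for h = g₁ + g₂
  set h : ℝ → ℝ := fun r => g₁ r + g₂ r with hhdef
  have hhmono : MonotoneOn h (Set.Icc 0 t) := fun r hr r' hr' hrr' =>
    add_le_add (hg₁mono hr hr' hrr') (hg₂mono hr hr' hrr')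
  have hhineq : ∀ r ∈ Set.Icc (0:ℝ) t, h r ≤ 3 * K + 6 * ∫ s in (0:ℝ)..r, h s := by
    intro r hr
    have h1 := est1 r hr
    have h2 := est2 r hr
    have h3 : (∫ s in (0:ℝ)..r, 2 * (g₁ s + g₂ s)) = 2 * ∫ s in (0:ℝ)..r, h s := by
      rw [← intervalIntegral.integral_const_mul]
    simp only [hhdef]
    rw [h3] at h1 h2
    linarith
  have hgron : ∀ r ∈ Set.Icc (0:ℝ) t, h r ≤ 3 * K * Real.exp (6 * r) :=
    gronwall_aux ht (by positivity) hhmono hhineq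
  have hexp0 : 0 < Real.exp (6 * t) := Real.exp_pos _
  have hexp1 : 1 ≤ Real.exp (6 * t) := Real.one_le_exp (by linarith)
  constructor
  · -- refined bound for g₁
    have h1 := est1 t ⟨ht, le_rfl⟩
    have hintexp : (∫ s in (0:ℝ)..t, Real.exp (6 * s)) = (Real.exp (6 * t) - 1) / 6 := by
      have h6 : (6:ℝ) ≠ 0 := by norm_num
      have := intervalIntegral.integral_comp_mul_right (a := (0:ℝ)) (b := t)
        (f := Real.exp) h6
      simp only [zero_mul, integral_exp, Real.exp_zero] at this
      have e : (fun s : ℝ => Real.exp (6 * s)) = fun s : ℝ => Real.exp (s * 6) := by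
        funext s; rw [mul_comm]
      rw [e, this, mul_comm]
      rw [smul_eq_mul]
      ring
    have hmono2 : (∫ s in (0:ℝ)..t, 2 * (g₁ s + g₂ s))
        ≤ ∫ s in (0:ℝ)..t, 6 * K * Real.exp (6 * s) := by
      refine intervalIntegral.integral_mono_on ht (hinth t ⟨ht, le_rfl⟩)
        ((by fun_prop : Continuous fun s : ℝ => 6 * K * Real.exp (6 * s)).intervalIntegrable _ _)
        ?_
      intro s hs
      have hgr : g₁ s + g₂ s ≤ 3 * K * Real.exp (6 * s) := hgron s hs
      linarith
    have hcalc : (∫ s in (0:ℝ)..t, 6 * K * Real.exp (6 * s)) = K * (Real.exp (6 * t) - 1) := by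
      rw [intervalIntegral.integral_const_mul, hintexp]
      ring
    have : g₁ t ≤ K * Real.exp (6 * t) := by
      rw [hcalc] at hmono2
      linarith
    have e1 : K * Real.exp (6 * t) ≤ δ * (1 + t) * Real.exp (6 * t) :=
      mul_le_mul_of_nonneg_right hKδ hexp0.le
    have e2 : 0 ≤ δ * (1 + t) * Real.exp (6 * t) := by positivity
    show g₁ t ≤ 2 * δ * (1 + t) * Real.exp (6 * t)
    nlinarith [e1, e2]
  · have h2 : g₁ t + g₂ t ≤ 3 * K * Real.exp (6 * t) := hgron t ⟨ht, le_rfl⟩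
    have h3 : 0 ≤ g₁ t := hg₁nn t
    have e1 : K * Real.exp (6 * t) ≤ δ * (1 + t) * Real.exp (6 * t) :=
      mul_le_mul_of_nonneg_right hKδ hexp0.le
    have e2 : 0 ≤ δ * (1 + t) * Real.exp (6 * t) := by positivity
    show g₂ t ≤ 4 * δ * (1 + t) * Real.exp (6 * t)
    nlinarith [e1, e2, h2, h3]
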